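/- In the group Z² * Z = ⟨a, b, c | [a,b]⟩, if t is an (a,b,c)-commutator, then the subgroup ⟨a, b, t⟩ factors as ⟨a, b⟩ * ⟨t⟩, i.e. it is isomorphic to Z² * Z. -/

import Mathlib

open Monoid

/-- The commutator convention of the paper: `[u,v] = u⁻¹ v⁻¹ u v`. -/
def pcomm {G : Type*} [Group G] (u v : G) : G := u⁻¹ * v⁻¹ * u * v

/-- `(a,b,c)`-commutators, defined inductively. -/
inductive IsABCCommutator {G : Type*} [Group G] (a b c : G) : G → Prop
  | base (x y z : ℤ) (hxy : |x| + |y| ≠ 0) (hz : z ≠ 0) :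
      IsABCCommutator a b c (pcomm (a ^ x * b ^ y) (c ^ z))
  | step (x y z : ℤ) (t : G) (hxy : |x| + |y| ≠ 0) (hz : z ≠ 0) :
      IsABCCommutator a b c t → IsABCCommutator a b c (pcomm (a ^ x * b ^ y) (t ^ z))

open Multiplicative


abbrev Ap : Type := Multiplicative (ℤ × ℤ)
abbrev Pfam : Ap → Type := fun _ => Multiplicative ℤ
abbrev PP : Type := Monoid.CoprodI Pfam

/-- one block: generator indexed by `u`, exponent `k`. -/
def blk (u : Ap) (k : ℤ) : PP := Monoid.CoprodI.of (i := u) (ofAdd k)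

lemma blk_mul (u : Ap) (k l : ℤ) : blk u k * blk u l = blk u (k + l) := by
  simp [blk, ← map_mul, ← ofAdd_add]

lemma blk_zero (u : Ap) : blk u 0 = 1 := by
  simp [blk]

def prodL (L : List (Ap × ℤ)) : PP := (L.map fun p => blk p.1 p.2).prod

@[simp] lemma prodL_nil : prodL [] = 1 := rfl
@[simp] lemma prodL_cons (p : Ap × ℤ) (L : List (Ap × ℤ)) :
    prodL (p :: L) = blk p.1 p.2 * prodL L := by simp [prodL]

def Valid (L : List (Ap × ℤ)) : Prop :=
  (∀ p ∈ L, p.2 ≠ 0) ∧ L.Chain' (fun p q => p.1 ≠ q.1)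

/-- turn a valid list into a `Word` -/
def toWord (L : List (Ap × ℤ)) (h : Valid L) : Monoid.CoprodI.Word Pfam where
  toList := L.map fun p => ⟨p.1, ofAdd p.2⟩
  ne_one := by
    intro l hl
    simp only [List.mem_map] at hl
    obtain ⟨p, hp, rfl⟩ := hl
    simpa using fun h0 => h.1 p hp (by simpa using h0)
  chain_ne := by
    have := h.2
    simpa [List.isChain_map, List.Chain'] using this

lemma prod_toWord (L : List (Ap × ℤ)) (h : Valid L) :
    (toWord L h).prod = prodL L := by
  simp [Monoid.CoprodI.Word.prod, toWord, prodL, List.map_map]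
  rfl

lemma prodL_inj {L L' : List (Ap × ℤ)} (h : Valid L) (h' : Valid L')
    (he : prodL L = prodL L') : L = L' := by
  have : toWord L h = toWord L' h' := by
    have hinj : Function.Injective (Monoid.CoprodI.Word.prod (M := Pfam)) :=
      (Monoid.CoprodI.Word.equiv (M := Pfam)).symm.injective
    apply hinj
    rw [prod_toWord, prod_toWord, he]
  have : (toWord L h).toList = (toWord L' h').toList := by rw [this]
  simp only [toWord] at this
  have hmapinj : Function.Injective (fun p : Ap × ℤ => (⟨p.1, ofAdd p.2⟩ : Σ i, Pfam i)) := by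
    rintro ⟨p1, p2⟩ ⟨q1, q2⟩ hpq
    obtain ⟨rfl, h⟩ := Sigma.mk.inj_iff.mp hpq
    have : p2 = q2 := by simpa using heq_iff_eq.mp h
    simp [this]
  exact List.map_injective_iff.mpr hmapinj this

lemma Ap_zpow_inj {m : Ap} (hm : m ≠ 1) : Function.Injective (fun n : ℤ => m ^ n) := by
  intro n n' h
  simp only at h
  have h' : n • m.toAdd = n' • m.toAdd := by
    have := congrArg Multiplicative.toAdd h
    simpa using this
  have hm0 : m.toAdd ≠ 0 := fun h0 => hm (toAdd_eq_zero.mp h0)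
  have h1 : n * m.toAdd.1 = n' * m.toAdd.1 := by
    have := congrArg Prod.fst h'; simpa [smul_eq_mul] using this
  have h2 : n * m.toAdd.2 = n' * m.toAdd.2 := by
    have := congrArg Prod.snd h'; simpa [smul_eq_mul] using this
  by_cases hx : m.toAdd.1 = 0
  · have hy : m.toAdd.2 ≠ 0 := fun hy => hm0 (Prod.ext hx hy)
    exact mul_right_cancel₀ hy h2
  · exact mul_right_cancel₀ hx h1

def tr (v : Ap) : PP →* PP :=
  Monoid.CoprodI.lift (fun u => (Monoid.CoprodI.of : Pfam (v * u) →* PP))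

lemma tr_of (v u : Ap) (x : Multiplicative ℤ) :
    tr v (Monoid.CoprodI.of (i := u) x) = Monoid.CoprodI.of (i := v * u) x :=
  Monoid.CoprodI.lift_of _ _

@[simp] lemma tr_blk (v u : Ap) (k : ℤ) : tr v (blk u k) = blk (v * u) k :=
  tr_of v u (ofAdd k)

lemma of_congr {u u' : Ap} (h : u = u') (x : Multiplicative ℤ) :
    (Monoid.CoprodI.of (i := u) x : PP) = Monoid.CoprodI.of (i := u') x := by subst h; rfl

lemma tr_tr (v w : Ap) (x : PP) : tr v (tr w x) = tr (v * w) x := by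
  have : (tr v).comp (tr w) = tr (v * w) := by
    apply Monoid.CoprodI.ext_hom
    intro i
    apply MonoidHom.ext
    intro x
    simp only [MonoidHom.comp_apply, tr_of]
    exact of_congr (mul_assoc v w i).symm x
  exact DFunLike.congr_fun this x

lemma tr_one (x : PP) : tr 1 x = x := by
  have : tr (1 : Ap) = MonoidHom.id PP := by
    apply Monoid.CoprodI.ext_hom
    intro i
    apply MonoidHom.ext
    intro x
    simp only [MonoidHom.comp_apply, tr_of, MonoidHom.id_apply]
    exact of_congr (one_mul i) x
  exact DFunLike.congr_fun this x

def trAut : Ap →* MulAut PP where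
  toFun v :=
    { toFun := tr v
      invFun := tr v⁻¹
      left_inv := fun x => by rw [tr_tr, inv_mul_cancel, tr_one]
      right_inv := fun x => by rw [tr_tr, mul_inv_cancel, tr_one]
      map_mul' := map_mul _ }
  map_one' := DFunLike.ext _ _ fun x => tr_one x
  map_mul' := fun v w => DFunLike.ext _ _ fun x => (tr_tr v w x).symm

@[simp] lemma trAut_apply (v : Ap) (x : PP) : trAut v x = tr v x := rfl

abbrev KK : Type := SemidirectProduct PP Ap trAut

lemma tr_prodL (v : Ap) (L : List (Ap × ℤ)) :
    tr v (prodL L) = prodL (L.map fun p => (v * p.1, p.2)) := by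
  induction L with
  | nil => simp [prodL]
  | cons p L ih => simp [prodL_cons, ih]

@[simp] lemma prodL_cons' (u : Ap) (k : ℤ) (L : List (Ap × ℤ)) :
    prodL ((u, k) :: L) = blk u k * prodL L := prodL_cons _ _

lemma Valid.cons {p : Ap × ℤ} {L : List (Ap × ℤ)} (h : Valid L) (hp : p.2 ≠ 0)
    (hL : ∀ q ∈ L.head?, p.1 ≠ q.1) : Valid (p :: L) := by
  refine ⟨?_, List.isChain_cons.mpr ⟨hL, h.2⟩⟩
  intro q hq
  rcases List.mem_cons.mp hq with rfl | hq
  · exact hp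
  · exact h.1 q hq

lemma Valid.of_cons {p : Ap × ℤ} {L : List (Ap × ℤ)} (h : Valid (p :: L)) : Valid L :=
  ⟨fun q hq => h.1 q (List.mem_cons_of_mem _ hq), (List.isChain_cons.mp h.2).2⟩

lemma Valid.head_ne {p q : Ap × ℤ} {L : List (Ap × ℤ)} (h : Valid (p :: q :: L)) :
    p.1 ≠ q.1 := (List.isChain_cons_cons.mp h.2).1

section Core

variable (m₀ : Ap) (z : ℤ)

def hh : PP := blk m₀⁻¹ (-z) * blk 1 z

def XCp : Set PP := { x | ∃ q k₂ L, Valid ((m₀⁻¹, -z) :: (q, k₂) :: L) ∧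
    (∃ n : ℤ, 0 ≤ n ∧ q = m₀ ^ n) ∧ x = prodL ((m₀⁻¹, -z) :: (q, k₂) :: L) }

def XCm : Set PP := { x | ∃ q k₂ L, Valid (((1 : Ap), -z) :: (q, k₂) :: L) ∧
    (∃ n : ℤ, n < 0 ∧ q = m₀ ^ n) ∧ x = prodL (((1 : Ap), -z) :: (q, k₂) :: L) }

def Apat (u q : Ap) : Prop :=
  ∃ v : Ap, v ≠ 1 ∧ ((∃ n : ℤ, 0 ≤ n ∧ u = v * m₀⁻¹ ∧ q = v * m₀ ^ n)
    ∨ (∃ n : ℤ, n < 0 ∧ u = v ∧ q = v * m₀ ^ n))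

def XA : Set PP := { x | ∃ u k L, Valid ((u, k) :: L) ∧ x = prodL ((u, k) :: L) ∧
    (k ≠ -z ∨ ∃ q k₂ L', L = (q, k₂) :: L' ∧ Apat m₀ u q) }

variable {m₀ z}
variable (hm : m₀ ≠ 1) (hz : z ≠ 0)
include hm

omit hm in
lemma blk_cancel (u : Ap) (k : ℤ) (x : PP) : blk u k * (blk u (-k) * x) = x := by
  rw [← mul_assoc, blk_mul]; simp [blk_zero]

lemma pow_ne (i j : ℤ) (hij : i ≠ j) : m₀ ^ i ≠ m₀ ^ j :=
  fun h => hij (Ap_zpow_inj hm h)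

lemma mne1 : m₀⁻¹ ≠ (1 : Ap) := inv_ne_one.mpr hm

include hz

/-- multiplying by `hh` sends `XA ∪ XCp` into `XCp`. -/
lemma h_mul_mem {x : PP} (hx : x ∈ XA m₀ z ∪ XCp m₀ z) : hh m₀ z * x ∈ XCp m₀ z := by
  have hmne := mne1 hm
  have hgen : ∀ u k L, Valid ((u, k) :: L) → u ≠ 1 →
      hh m₀ z * prodL ((u, k) :: L) ∈ XCp m₀ z := by
    intro u k L hv hu
    refine ⟨1, z, (u, k) :: L, ?_, ⟨0, le_refl 0, by simp⟩, ?_⟩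
    · refine (hv.cons hz ?_).cons (by simpa using neg_ne_zero.mpr hz) (by
        intro p hp; simp at hp; subst hp; exact hmne)
      intro p hp
      simp at hp
      subst hp
      exact fun h1 => hu h1.symm
    · simp only [prodL_cons', hh]
      rw [mul_assoc]
  rcases hx with hx | hx
  · obtain ⟨u, k, L, hv, rfl, hcond⟩ := hx
    by_cases hu : u = 1
    · subst hu
      by_cases hk : k = -z
      · -- full cancellation case
        subst hk
        rcases hcond with hk' | ⟨q, k₂, L', rfl, hA⟩
        · exact absurd rfl hk'
        obtain ⟨v, hv1, hA⟩ := hA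
        have hq : ∃ n : ℤ, 1 ≤ n ∧ q = m₀ ^ n := by
          rcases hA with ⟨n, hn, hu1, hq⟩ | ⟨n, hn, hu1, hq⟩
          · have hvm : v = m₀ := mul_inv_eq_one.mp hu1.symm
            refine ⟨n + 1, by omega, ?_⟩
            rw [hq, hvm, zpow_add_one m₀ n, mul_comm]
          · exact absurd hu1.symm hv1
        obtain ⟨n, hn, rfl⟩ := hq
        refine ⟨m₀ ^ n, k₂, L', ?_, ⟨n, by omega, rfl⟩, ?_⟩
        · refine (hv.of_cons).cons (by simpa using neg_ne_zero.mpr hz) ?_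
          intro p hp
          simp at hp
          subst hp
          intro hcontra
          refine pow_ne hm (-1) n (by omega) ?_
          rw [zpow_neg, zpow_one]
          exact hcontra
        · simp only [prodL_cons', hh]
          rw [mul_assoc, blk_cancel]
      · -- merge case
        refine ⟨1, z + k, L, ?_, ⟨0, le_refl 0, by simp⟩, ?_⟩
        · refine ((hv.of_cons).cons (by simpa using fun hc => hk (by omega)) ?_).cons
            (by simpa using neg_ne_zero.mpr hz)
            (by intro p hp; simp at hp; subst hp; exact hmne)
          intro p hp
          exact (List.isChain_cons.mp hv.2).1 p hp
        · simp only [prodL_cons', hh]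
          rw [mul_assoc, ← mul_assoc (blk 1 z), blk_mul]
    · exact hgen u k L hv hu
  · -- x ∈ XCp
    obtain ⟨q, k₂, L, hv, hq, rfl⟩ := hx
    exact hgen _ _ _ hv hmne

/-- multiplying by `hh⁻¹` sends `XA ∪ XCm` into `XCm`. -/
lemma hinv_mul_mem {x : PP} (hx : x ∈ XA m₀ z ∪ XCm m₀ z) : (hh m₀ z)⁻¹ * x ∈ XCm m₀ z := by
  have hmne := mne1 hm
  have hHinv : (hh m₀ z)⁻¹ = blk 1 (-z) * blk m₀⁻¹ z := by
    rw [hh, mul_inv_rev]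
    have h1 : (blk 1 z)⁻¹ = blk 1 (-z) := by
      rw [eq_comm, eq_inv_iff_mul_eq_one, blk_mul]; simp [blk_zero]
    have h2 : (blk m₀⁻¹ (-z))⁻¹ = blk m₀⁻¹ z := by
      rw [eq_comm, eq_inv_iff_mul_eq_one, blk_mul]; simp [blk_zero]
    rw [h1, h2]
  have hgen : ∀ u k L, Valid ((u, k) :: L) → u ≠ m₀⁻¹ →
      (hh m₀ z)⁻¹ * prodL ((u, k) :: L) ∈ XCm m₀ z := by
    intro u k L hv hu
    refine ⟨m₀⁻¹, z, (u, k) :: L, ?_, ⟨-1, by omega, by rw [zpow_neg, zpow_one]⟩, ?_⟩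
    · refine (hv.cons hz ?_).cons (by simpa using neg_ne_zero.mpr hz) (by
        intro p hp; simp at hp; subst hp; exact fun h1 => hmne h1.symm)
      intro p hp
      simp at hp
      subst hp
      exact fun h1 => hu h1.symm
    · simp only [prodL_cons', hHinv]
      rw [mul_assoc]
  rcases hx with hx | hx
  · obtain ⟨u, k, L, hv, rfl, hcond⟩ := hx
    by_cases hu : u = m₀⁻¹
    · subst hu
      by_cases hk : k = -z
      · -- full cancellation case
        subst hk
        rcases hcond with hk' | ⟨q, k₂, L', rfl, hA⟩
        · exact absurd rfl hk'
        obtain ⟨v, hv1, hA⟩ := hA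
        have hq : ∃ n : ℤ, n ≤ -2 ∧ q = m₀ ^ n := by
          rcases hA with ⟨n, hn, hu1, hq⟩ | ⟨n, hn, hu1, hq⟩
          · exfalso
            apply hv1
            have h' : v * m₀⁻¹ = 1 * m₀⁻¹ := by rw [one_mul, ← hu1]
            exact mul_right_cancel h'
          · have hvm : v = m₀⁻¹ := hu1.symm
            refine ⟨n - 1, by omega, ?_⟩
            rw [hq, hvm, zpow_sub_one m₀ n]
            exact mul_comm _ _
        obtain ⟨n, hn, rfl⟩ := hq
        refine ⟨m₀ ^ n, k₂, L', ?_, ⟨n, by omega, rfl⟩, ?_⟩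
        · refine (hv.of_cons).cons (by simpa using neg_ne_zero.mpr hz) ?_
          intro p hp
          simp at hp
          subst hp
          intro hcontra
          refine pow_ne hm 0 n (by omega) ?_
          rw [zpow_zero]
          exact hcontra
        · simp only [prodL_cons', hHinv]
          rw [mul_assoc]
          congr 1
          rw [show blk m₀⁻¹ z * (blk m₀⁻¹ (-z) * (blk (m₀ ^ n) k₂ * prodL L')) =
              (blk (m₀ ^ n) k₂ * prodL L') from blk_cancel _ _ _]
      · -- merge case
        refine ⟨m₀⁻¹, z + k, L, ?_, ⟨-1, by omega, by rw [zpow_neg, zpow_one]⟩, ?_⟩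
        · refine ((hv.of_cons).cons (by simpa using fun hc => hk (by omega)) ?_).cons
            (by simpa using neg_ne_zero.mpr hz)
            (by intro p hp; simp at hp; subst hp; exact fun h1 => hmne h1.symm)
          intro p hp
          exact (List.isChain_cons.mp hv.2).1 p hp
        · simp only [prodL_cons', hHinv]
          rw [mul_assoc, ← mul_assoc (blk m₀⁻¹ z), blk_mul]
    · exact hgen u k L hv hu
  · -- x ∈ XCm
    obtain ⟨q, k₂, L, hv, hq, rfl⟩ := hx
    exact hgen _ _ _ hv (fun h1 => hmne h1.symm)

end Core

section Core2

variable {m₀ : Ap} {z : ℤ}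
variable (hm : m₀ ≠ 1) (hz : z ≠ 0)
include hm hz

lemma hpow_mul_mem {x : PP} (hx : x ∈ XA m₀ z) {n : ℤ} (hn : n ≠ 0) :
    hh m₀ z ^ n * x ∈ XCp m₀ z ∪ XCm m₀ z := by
  rcases lt_or_gt_of_ne hn with hneg | hpos
  · right
    obtain ⟨m, hm'⟩ := Int.exists_eq_neg_ofNat (le_of_lt hneg)
    have hm1 : 1 ≤ m := by omega
    have key : ∀ k : ℕ, 1 ≤ k → ((hh m₀ z)⁻¹) ^ k * x ∈ XCm m₀ z := by
      intro k hk
      induction k with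
      | zero => omega
      | succ k ih =>
        rcases Nat.eq_or_lt_of_le hk with h1 | h2
        · rw [← h1, pow_one]
          exact hinv_mul_mem hm hz (Or.inl hx)
        · have ihk := ih (by omega)
          rw [pow_succ', mul_assoc]
          exact hinv_mul_mem hm hz (Or.inr ihk)
    have h2 := key m hm1
    have h3 : hh m₀ z ^ n = ((hh m₀ z)⁻¹) ^ m := by
      rw [inv_pow, ← zpow_natCast, ← zpow_neg, ← hm']
    rwa [h3]
  · left
    obtain ⟨m, hm'⟩ : ∃ m : ℕ, n = (m : ℤ) := ⟨n.toNat, by omega⟩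
    have hm1 : 1 ≤ m := by omega
    have key : ∀ k : ℕ, 1 ≤ k → (hh m₀ z) ^ k * x ∈ XCp m₀ z := by
      intro k hk
      induction k with
      | zero => omega
      | succ k ih =>
        rcases Nat.eq_or_lt_of_le hk with h1 | h2
        · rw [← h1, pow_one]
          exact h_mul_mem hm hz (Or.inl hx)
        · have ihk := ih (by omega)
          rw [pow_succ', mul_assoc]
          exact h_mul_mem hm hz (Or.inr ihk)
    have h2 := key m hm1
    rwa [hm', zpow_natCast]

omit hm hz in
lemma valid_map (v : Ap) {L : List (Ap × ℤ)} (h : Valid L) :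
    Valid (L.map fun p => (v * p.1, p.2)) := by
  constructor
  · intro p hp
    simp only [List.mem_map] at hp
    obtain ⟨q, hq, rfl⟩ := hp
    exact h.1 q hq
  · unfold List.Chain'; rw [List.isChain_map]
    refine List.IsChain.imp ?_ h.2
    intro p q hpq hc
    exact hpq (mul_left_cancel (a := v) hc)

/-- translation by `v ≠ 1` sends `XCp ∪ XCm` into `XA`. -/
lemma tr_mem {v : Ap} (hv : v ≠ 1) {x : PP} (hx : x ∈ XCp m₀ z ∪ XCm m₀ z) :
    tr v x ∈ XA m₀ z := by
  rcases hx with hx | hx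
  · obtain ⟨q, k₂, L, hval, ⟨n, hn, rfl⟩, rfl⟩ := hx
    refine ⟨v * m₀⁻¹, -z, (v * m₀ ^ n, k₂) :: L.map (fun p => (v * p.1, p.2)), ?_, ?_, ?_⟩
    · have := valid_map v hval
      simpa using this
    · rw [tr_prodL]
      simp
    · exact Or.inr ⟨v * m₀ ^ n, k₂, _, rfl, ⟨v, hv, Or.inl ⟨n, hn, rfl, rfl⟩⟩⟩
  · obtain ⟨q, k₂, L, hval, ⟨n, hn, rfl⟩, rfl⟩ := hx
    refine ⟨v, -z, (v * m₀ ^ n, k₂) :: L.map (fun p => (v * p.1, p.2)), ?_, ?_, ?_⟩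
    · have := valid_map v hval
      simpa using this
    · rw [tr_prodL]
      simp
    · exact Or.inr ⟨v * m₀ ^ n, k₂, _, rfl, ⟨v, hv, Or.inr ⟨n, hn, rfl, rfl⟩⟩⟩

/-- `XA` and `XCp ∪ XCm` are disjoint. -/
lemma XA_disj : XA m₀ z ∩ (XCp m₀ z ∪ XCm m₀ z) = ∅ := by
  ext x
  simp only [Set.mem_inter_iff, Set.mem_empty_iff_false, iff_false, not_and]
  rintro ⟨u, k, L, hvA, rfl, hcond⟩ hC
  rcases hC with ⟨q, k₂, L₂, hvC, ⟨n, hn, rfl⟩, heq⟩ | ⟨q, k₂, L₂, hvC, ⟨n, hn, rfl⟩, heq⟩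
  · have := prodL_inj hvA hvC heq
    injection this with h1 h2
    injection h1 with h1a h1b
    subst h2
    rcases hcond with hk | ⟨q', k₂', L', hL, hA⟩
    · exact hk h1b
    · injection hL with hqq hLL
      injection hqq with hq1 hq2
      obtain ⟨w, hw1, hA⟩ := hA
      rcases hA with ⟨n', hn', hu, hq⟩ | ⟨n', hn', hu, hq⟩
      · -- u = w * m₀⁻¹ = m₀⁻¹ ⇒ w = 1
        apply hw1
        rw [h1a] at hu
        have : w * m₀⁻¹ = 1 * m₀⁻¹ := by rw [one_mul, ← hu]
        exact mul_right_cancel this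
      · -- u = w, q' = w * m₀^n' = m₀⁻¹ * m₀^n' = m₀^(n'-1), n' < 0; but q' = m₀^n, n ≥ 0
        have hw : w = m₀⁻¹ := by rw [← hu, h1a]
        rw [← hq1] at hq
        have : m₀ ^ n = m₀ ^ (n' - 1) := by
          rw [hq, hw, zpow_sub_one]
          exact mul_comm _ _
        exact absurd (Ap_zpow_inj hm this) (by omega)
  · have := prodL_inj hvA hvC heq
    injection this with h1 h2
    injection h1 with h1a h1b
    subst h2
    rcases hcond with hk | ⟨q', k₂', L', hL, hA⟩
    · exact hk h1b
    · injection hL with hqq hLL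
      injection hqq with hq1 hq2
      obtain ⟨w, hw1, hA⟩ := hA
      rcases hA with ⟨n', hn', hu, hq⟩ | ⟨n', hn', hu, hq⟩
      · -- 1 = w * m₀⁻¹ ⇒ w = m₀; q' = m₀^(n'+1) with n'+1 ≥ 1 but q' = m₀^n, n < 0
        have hwm : w = m₀ := mul_inv_eq_one.mp (by rw [h1a] at hu; exact hu.symm)
        rw [← hq1] at hq
        have : m₀ ^ n = m₀ ^ (n' + 1) := by
          rw [hq, hwm, zpow_add_one]
          exact mul_comm _ _
        exact absurd (Ap_zpow_inj hm this) (by omega)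
      · -- u = w = 1 contradiction
        apply hw1
        rw [← hu, h1a]

end Core2

section Assemble

variable {m₀ : Ap} {z : ℤ}

lemma hh_mem_XCp (hm : m₀ ≠ 1) (hz : z ≠ 0) : hh m₀ z ∈ XCp m₀ z := by
  refine ⟨1, z, [], ?_, ⟨0, le_refl 0, by simp⟩, by simp [hh, prodL]⟩
  have h1 : Valid [((1 : Ap), z)] := ⟨by simp [hz], List.isChain_singleton _⟩
  refine h1.cons (by simpa using neg_ne_zero.mpr hz) ?_
  intro p hp
  simp at hp
  subst hp
  exact mne1 hm

lemma blkz_mem_XA (hz : z ≠ 0) : blk (1 : Ap) z ∈ XA m₀ z := by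
  refine ⟨1, z, [], ⟨by simp [hz], List.isChain_singleton _⟩, by simp [prodL], Or.inl ?_⟩
  intro hc
  exact hz (by omega)

abbrev HH : Bool → Type := fun b => cond b Ap (Multiplicative ℤ)

instance instHHGroup : ∀ b, Group (HH b) := fun b => by cases b <;> dsimp [HH] <;> infer_instance

abbrev GG : Type := Monoid.Coprod Ap (Multiplicative ℤ)
abbrev DD : Type := Monoid.CoprodI HH

def FF (m₀ : Ap) (z : ℤ) : ∀ b, HH b →* KK := fun b =>
  Bool.rec (motive := fun b => HH b →* KK)
    (zpowersHom KK (SemidirectProduct.inl (hh m₀ z)))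
    (SemidirectProduct.inr) b

def Xset (m₀ : Ap) (z : ℤ) : Bool → Set KK := fun b =>
  cond b (SemidirectProduct.left ⁻¹' XA m₀ z)
    (SemidirectProduct.left ⁻¹' (XCp m₀ z ∪ XCm m₀ z))

lemma mem_Xset_true {x : KK} : x ∈ Xset m₀ z true ↔ x.left ∈ XA m₀ z := Iff.rfl
lemma mem_Xset_false {x : KK} : x ∈ Xset m₀ z false ↔ x.left ∈ XCp m₀ z ∪ XCm m₀ z := Iff.rfl

lemma pp_inr (hm : m₀ ≠ 1) (hz : z ≠ 0) (v : Ap) (hv : v ≠ 1) (x : KK)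
    (hx : x ∈ Xset m₀ z false) : (SemidirectProduct.inr (φ := trAut) v) * x ∈ Xset m₀ z true := by
  rw [mem_Xset_true]
  rw [SemidirectProduct.mul_left, SemidirectProduct.left_inr, SemidirectProduct.right_inr, one_mul,
    trAut_apply]
  exact tr_mem hm hz hv (mem_Xset_false.mp hx)

lemma pp_inl (hm : m₀ ≠ 1) (hz : z ≠ 0) (w : Multiplicative ℤ) (hw : w ≠ 1) (x : KK)
    (hx : x ∈ Xset m₀ z true) :
    (zpowersHom KK (SemidirectProduct.inl (φ := trAut) (hh m₀ z)) w) * x ∈ Xset m₀ z false := by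
  rw [mem_Xset_false]
  rw [zpowersHom_apply, ← map_zpow, SemidirectProduct.mul_left, SemidirectProduct.left_inl,
    SemidirectProduct.right_inl, map_one, MulAut.one_apply]
  exact hpow_mul_mem hm hz (mem_Xset_true.mp hx) (fun hc => hw (by
    have : w = Multiplicative.ofAdd 0 := by rw [← hc]; rfl
    simpa using this))

open Cardinal in
lemma liftFF_injective (hm : m₀ ≠ 1) (hz : z ≠ 0) :
    Function.Injective (Monoid.CoprodI.lift (FF m₀ z)) := by
  apply Monoid.CoprodI.lift_injective_of_ping_pong (FF m₀ z)
      (Or.inr ⟨true, by exact_mod_cast (Cardinal.nat_lt_aleph0 3).le.trans (Cardinal.aleph0_le_mk Ap)⟩)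
      (Xset m₀ z) (α := KK)
  · -- nonempty
    intro b
    cases b
    · exact ⟨SemidirectProduct.inl (hh m₀ z), mem_Xset_false.mpr (by
        rw [SemidirectProduct.left_inl]; exact Or.inl (hh_mem_XCp hm hz))⟩
    · exact ⟨SemidirectProduct.inl (blk 1 z), mem_Xset_true.mpr (by
        rw [SemidirectProduct.left_inl]; exact blkz_mem_XA hz)⟩
  · -- disjoint
    have key : Disjoint (Xset m₀ z true) (Xset m₀ z false) := by
      rw [Set.disjoint_left]
      intro x hx1 hx2
      have hmem : x.left ∈ XA m₀ z ∩ (XCp m₀ z ∪ XCm m₀ z) :=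
        ⟨mem_Xset_true.mp hx1, mem_Xset_false.mp hx2⟩
      rw [XA_disj hm hz] at hmem
      exact hmem
    intro i j hij
    cases i <;> cases j
    · exact absurd rfl hij
    · exact (show (Function.onFun Disjoint (Xset m₀ z)) false true from key.symm)
    · exact (show (Function.onFun Disjoint (Xset m₀ z)) true false from key)
    · exact absurd rfl hij
  · -- ping pong
    intro i j hij
    cases i
    · cases j
      · exact absurd rfl hij
      · intro w hw
        intro x hx
        rw [Set.mem_smul_set] at hx
        obtain ⟨y, hy, rfl⟩ := hx
        rw [smul_eq_mul]
        exact pp_inl hm hz w hw y hy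
    · cases j
      · intro v hv x hx
        rw [Set.mem_smul_set] at hx
        obtain ⟨y, hy, rfl⟩ := hx
        rw [smul_eq_mul]
        exact pp_inr hm hz v hv y hy
      · exact absurd rfl hij

end Assemble

lemma blk_inv (u : Ap) (k : ℤ) : (blk u k)⁻¹ = blk u (-k) := by
  rw [eq_comm, eq_inv_iff_mul_eq_one, blk_mul]
  simp [blk_zero]

lemma blk_zpow (u : Ap) (k n : ℤ) : blk u k ^ n = blk u (n * k) := by
  have h : (Multiplicative.ofAdd k) ^ n = Multiplicative.ofAdd (n * k) := by
    rw [← ofAdd_zsmul, smul_eq_mul]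
  simp only [blk, ← map_zpow, h]

def iotaD : GG →* DD :=
  Monoid.Coprod.lift (Monoid.CoprodI.of (M := HH) (i := true)) (Monoid.CoprodI.of (M := HH) (i := false))

def rhoD : DD →* GG :=
  Monoid.CoprodI.lift (fun b => Bool.rec (motive := fun b => HH b →* GG)
    Monoid.Coprod.inr Monoid.Coprod.inl b)

lemma rho_iota : rhoD.comp iotaD = MonoidHom.id GG := by
  apply Monoid.Coprod.hom_ext
  · apply MonoidHom.ext
    intro u
    simp only [MonoidHom.comp_apply, MonoidHom.id_apply, iotaD, Monoid.Coprod.lift_apply_inl, rhoD]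
    exact Monoid.CoprodI.lift_of (M := HH) _ (i := true) u
  · apply MonoidHom.ext
    intro u
    simp only [MonoidHom.comp_apply, MonoidHom.id_apply, iotaD, Monoid.Coprod.lift_apply_inr, rhoD]
    exact Monoid.CoprodI.lift_of (M := HH) _ (i := false) u

lemma iota_injective : Function.Injective iotaD := by
  intro x y hxy
  have ex := DFunLike.congr_fun rho_iota x
  have ey := DFunLike.congr_fun rho_iota y
  simp only [MonoidHom.comp_apply, MonoidHom.id_apply] at ex ey
  rw [← ex, ← ey, hxy]

def Theta : GG →* KK :=
  Monoid.Coprod.lift (SemidirectProduct.inr)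
    (zpowersHom KK (SemidirectProduct.inl (blk 1 1)))

def pcomm' {G : Type*} [Group G] (u v : G) : G := u⁻¹ * v⁻¹ * u * v

lemma map_pcomm' {G H : Type*} [Group G] [Group H] (f : G →* H) (u v : G) :
    f (pcomm' u v) = pcomm' (f u) (f v) := by simp [pcomm']

lemma Theta_pcomm (m₀ : Ap) (z : ℤ) :
    Theta (pcomm' (Monoid.Coprod.inl m₀) (Monoid.Coprod.inr (Multiplicative.ofAdd z))) =
      SemidirectProduct.inl (hh m₀ z) := by
  have h1 : Theta (Monoid.Coprod.inl m₀) = SemidirectProduct.inr m₀ :=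
    Monoid.Coprod.lift_apply_inl _ _ _
  have h2 : Theta (Monoid.Coprod.inr (Multiplicative.ofAdd z)) =
      SemidirectProduct.inl (blk 1 z) := by
    rw [Theta, Monoid.Coprod.lift_apply_inr, zpowersHom_apply, ← map_zpow]
    congr 1
    rw [blk_zpow]
    simp
  rw [pcomm', map_mul, map_mul, map_mul, map_inv, map_inv, h1, h2]
  have haut : ((trAut m₀)⁻¹ : MulAut PP) (blk 1 (-z)) = blk m₀⁻¹ (-z) := by
    rw [← map_inv, trAut_apply, tr_blk, mul_one]
  ext <;> simp [hh, blk_inv, haut]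

set_option maxHeartbeats 2000000 in
lemma base_case (m₀ : Ap) (hm : m₀ ≠ 1) (z : ℤ) (hz : z ≠ 0) :
    Function.Injective (Monoid.Coprod.lift (Monoid.Coprod.inl : Ap →* GG)
      (zpowersHom GG (pcomm' (Monoid.Coprod.inl m₀)
        (Monoid.Coprod.inr (Multiplicative.ofAdd z))))) := by
  set t₀ := pcomm' (Monoid.Coprod.inl m₀) (Monoid.Coprod.inr (Multiplicative.ofAdd z)) with ht₀
  set ψ := Monoid.Coprod.lift (Monoid.Coprod.inl : Ap →* GG) (zpowersHom GG t₀) with hψ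
  have hcomp : Theta.comp ψ = (Monoid.CoprodI.lift (FF m₀ z)).comp iotaD := by
    apply Monoid.Coprod.hom_ext
    · apply MonoidHom.ext
      intro u
      simp only [MonoidHom.comp_apply]
      rw [show ψ (Monoid.Coprod.inl u) = Monoid.Coprod.inl u from
        Monoid.Coprod.lift_apply_inl Monoid.Coprod.inl (zpowersHom GG t₀) u]
      rw [show Theta (Monoid.Coprod.inl u) = SemidirectProduct.inr u from
        Monoid.Coprod.lift_apply_inl SemidirectProduct.inr
          (zpowersHom KK (SemidirectProduct.inl (blk 1 1))) u]
      rw [show iotaD (Monoid.Coprod.inl u) = Monoid.CoprodI.of (M := HH) (i := true) u from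
        Monoid.Coprod.lift_apply_inl (Monoid.CoprodI.of (M := HH) (i := true))
          (Monoid.CoprodI.of (M := HH) (i := false)) u]
      exact (Monoid.CoprodI.lift_of (M := HH) (FF m₀ z) (i := true) u).symm
    · apply MonoidHom.ext_mint
      have hL : (Theta.comp ψ) (Monoid.Coprod.inr (Multiplicative.ofAdd (1 : ℤ))) =
          SemidirectProduct.inl (hh m₀ z) := by
        rw [MonoidHom.comp_apply]
        have h1 : ψ (Monoid.Coprod.inr (Multiplicative.ofAdd (1 : ℤ))) = t₀ := by
          rw [hψ, Monoid.Coprod.lift_apply_inr]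
          exact zpow_one t₀
        rw [h1, ht₀, Theta_pcomm]
      have hR : ((Monoid.CoprodI.lift (FF m₀ z)).comp iotaD)
          (Monoid.Coprod.inr (Multiplicative.ofAdd (1 : ℤ))) =
          SemidirectProduct.inl (hh m₀ z) := by
        rw [MonoidHom.comp_apply]
        have h2 : iotaD (Monoid.Coprod.inr (Multiplicative.ofAdd (1 : ℤ))) =
            Monoid.CoprodI.of (M := HH) (i := false) (Multiplicative.ofAdd (1 : ℤ)) :=
          Monoid.Coprod.lift_apply_inr _ _ _
        rw [h2]
        have h3 := Monoid.CoprodI.lift_of (M := HH) (FF m₀ z) (i := false)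
          (Multiplicative.ofAdd (1 : ℤ))
        rw [h3]
        exact zpow_one _
      have := hL.trans hR.symm
      simpa only [MonoidHom.comp_apply] using this
  have hinj2 : Function.Injective ((Monoid.CoprodI.lift (FF m₀ z)).comp iotaD) := by
    rw [MonoidHom.coe_comp]
    exact (liftFF_injective hm hz).comp iota_injective
  have hinj : Function.Injective (Theta.comp ψ) := by rw [hcomp]; exact hinj2
  have h' : Function.Injective (⇑Theta ∘ ⇑ψ) := by rw [← MonoidHom.coe_comp]; exact hinj
  exact h'.of_comp

lemma e1 (x y : ℤ) :
    (Monoid.Coprod.inl (Multiplicative.ofAdd ((1, 0) : ℤ × ℤ)) : GG) ^ x *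
      (Monoid.Coprod.inl (Multiplicative.ofAdd ((0, 1) : ℤ × ℤ))) ^ y =
    Monoid.Coprod.inl (Multiplicative.ofAdd ((x, y) : ℤ × ℤ)) := by
  rw [← map_zpow (Monoid.Coprod.inl : Ap →* GG), ← map_zpow (Monoid.Coprod.inl : Ap →* GG),
    ← map_mul]
  congr 1
  rw [← ofAdd_zsmul, ← ofAdd_zsmul, ← ofAdd_add]
  congr 1
  simp [Prod.ext_iff]

lemma e2 (z : ℤ) :
    (Monoid.Coprod.inr (Multiplicative.ofAdd (1 : ℤ)) : GG) ^ z =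
      Monoid.Coprod.inr (Multiplicative.ofAdd z) := by
  rw [← map_zpow (Monoid.Coprod.inr : Multiplicative ℤ →* GG)]
  congr 1
  rw [← ofAdd_zsmul]
  simp

lemma mone (x y : ℤ) (hxy : |x| + |y| ≠ 0) :
    (Multiplicative.ofAdd ((x, y) : ℤ × ℤ)) ≠ (1 : Ap) := by
  intro h
  have h2 : ((x, y) : ℤ × ℤ) = 0 := by simpa using h
  rw [Prod.ext_iff] at h2
  obtain ⟨hx, hy⟩ := h2
  simp only at hx hy
  subst hx; subst hy
  simp at hxy

set_option maxHeartbeats 1000000 in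
/-- In `Z² * Z = ⟨a,b,c | [a,b]⟩`, if `t` is an `(a,b,c)`-commutator then
`⟨a,b,t⟩` factors as `⟨a,b⟩ * ⟨t⟩ ≅ Z² * Z`: the natural homomorphism
`Z² * Z → G` sending `a ↦ a`, `b ↦ b`, `c ↦ t` is injective. -/
theorem abcCommutator_free_factor
    (a b c t : Coprod (Multiplicative (ℤ × ℤ)) (Multiplicative ℤ))
    (ha : a = Coprod.inl (Multiplicative.ofAdd ((1, 0) : ℤ × ℤ)))
    (hb : b = Coprod.inl (Multiplicative.ofAdd ((0, 1) : ℤ × ℤ)))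
    (hc : c = Coprod.inr (Multiplicative.ofAdd (1 : ℤ)))
    (ht : IsABCCommutator a b c t) :
    Function.Injective
      (Coprod.lift (Coprod.inl : Multiplicative (ℤ × ℤ) →* Coprod (Multiplicative (ℤ × ℤ)) (Multiplicative ℤ))
        (zpowersHom _ t)) := by
  subst ha hb hc
  induction ht with
  | base x y z hxy hz =>
      rw [show pcomm ((Coprod.inl (ofAdd ((1, 0) : ℤ × ℤ)) : GG) ^ x *
            (Coprod.inl (ofAdd ((0, 1) : ℤ × ℤ))) ^ y)
            ((Coprod.inr (ofAdd (1 : ℤ))) ^ z) =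
          pcomm' (Coprod.inl (ofAdd ((x, y) : ℤ × ℤ))) (Coprod.inr (ofAdd z)) by
        rw [e1, e2]; rfl]
      exact base_case (ofAdd (x, y)) (mone x y hxy) z hz
  | step x y z t hxy hz ht IH =>
      have key : (Coprod.lift (Coprod.inl : Ap →* GG)
            (zpowersHom GG (pcomm ((Coprod.inl (ofAdd ((1, 0) : ℤ × ℤ)) : GG) ^ x *
              (Coprod.inl (ofAdd ((0, 1) : ℤ × ℤ))) ^ y) (t ^ z)))) =
          (Coprod.lift (Coprod.inl : Ap →* GG) (zpowersHom GG t)).comp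
            (Coprod.lift (Coprod.inl : Ap →* GG)
              (zpowersHom GG (pcomm' (Coprod.inl (ofAdd ((x, y) : ℤ × ℤ)))
                (Coprod.inr (ofAdd z))))) := by
        apply Monoid.Coprod.hom_ext
        · apply MonoidHom.ext
          intro u
          simp only [MonoidHom.comp_apply, Monoid.Coprod.lift_apply_inl]
        · apply MonoidHom.ext_mint
          simp only [MonoidHom.comp_apply, Monoid.Coprod.lift_apply_inr, zpowersHom_apply,
            toAdd_ofAdd, zpow_one]
          rw [map_pcomm']
          rw [show pcomm' ((Coprod.lift (Coprod.inl : Ap →* GG) (zpowersHom GG t))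
                (Coprod.inl (ofAdd ((x, y) : ℤ × ℤ))))
              ((Coprod.lift (Coprod.inl : Ap →* GG) (zpowersHom GG t))
                (Coprod.inr (ofAdd z))) =
            pcomm' (Coprod.inl (ofAdd ((x, y) : ℤ × ℤ))) (t ^ z) by
              rw [Monoid.Coprod.lift_apply_inl, Monoid.Coprod.lift_apply_inr, zpowersHom_apply,
                toAdd_ofAdd]]
          rw [← e1 x y]
          rfl
      rw [key, MonoidHom.coe_comp]
      exact Function.Injective.comp IH (base_case (ofAdd (x, y)) (mone x y hxy) z hz)
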